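/- Let Q be a nonempty dense linear order without endpoints, let a_1 > a_2 > ⋯ > a_m be a strictly decreasing tuple in Q, and let D₁, D₂ ⊆ Q^n be sets definable with parameters among {a_1,…,a_m}. If χ_v(D₁) = χ_v(D₂) for every vector v ∈ ℕ^{m+1}, then there is a definable bijection from D₁ onto D₂. -/

import Mathlib

open FirstOrder FirstOrder.Language

attribute [local instance] FirstOrder.Language.orderStructure

/-- A subset of `Q^n` is definable if it is defined by a first-order formula in the
language of orders with finitely many parameters from `Q`. -/
def DLODefinable {Q : Type*} [LinearOrder Q] {n : ℕ} (s : Set (Fin n → Q)) : Prop :=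
  ∃ A : Set Q, A.Finite ∧ A.Definable Language.order s

/-- The graph of `f` restricted to `D₁`, as a subset of `Q^(n+m)`. -/
def graphOn {Q : Type*} {n m : ℕ} (D₁ : Set (Fin n → Q))
    (f : (Fin n → Q) → (Fin m → Q)) : Set (Fin (n + m) → Q) :=
  {z | ∃ x ∈ D₁, z = Fin.append x (f x)}

/-- A definable bijection from `D₁ ⊆ Q^n` onto `D₂ ⊆ Q^m`: a bijection from `D₁` onto `D₂`
whose graph is a definable subset of `Q^(n+m)`. -/
def DefBij {Q : Type*} [LinearOrder Q] {n m : ℕ} (D₁ : Set (Fin n → Q))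
    (D₂ : Set (Fin m → Q)) : Prop :=
  ∃ f : (Fin n → Q) → (Fin m → Q), Set.BijOn f D₁ D₂ ∧ DLODefinable (graphOn D₁ f)

/-- `x, y ∈ Q^n` have the same order type over the tuple `a`. -/
def SameOrderType {Q : Type*} [LinearOrder Q] {m n : ℕ} (a : Fin m → Q)
    (x y : Fin n → Q) : Prop :=
  (∀ i j, x i < x j ↔ y i < y j) ∧
    ∀ i k, (x i < a k ↔ y i < a k) ∧ (a k < x i ↔ a k < y i)

/-- Membership in the `g`-th gap determined by the strictly decreasing tuple `a`:
`G_0 = (a 0, ∞)`, `G_g = (a g, a (g-1))` for `0 < g < m`, and `G_m = (-∞, a (m-1))`. -/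
def InGap {Q : Type*} [LinearOrder Q] {m : ℕ} (a : Fin m → Q) (g : Fin (m + 1)) (q : Q) :
    Prop :=
  (∀ h : (g : ℕ) < m, a ⟨g, h⟩ < q) ∧ ∀ j : Fin m, (j : ℕ) + 1 = (g : ℕ) → q < a j

/-- The number of distinct values among the coordinates of `x` lying in the `g`-th gap. -/
noncomputable def gapCount {Q : Type*} [LinearOrder Q] {m n : ℕ} (a : Fin m → Q)
    (x : Fin n → Q) (g : Fin (m + 1)) : ℕ :=
  Set.ncard {q : Q | (∃ i, x i = q) ∧ InGap a g q}

/-- The characteristic `χ_v(D)`: the number of equivalence classes of points of `D` under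
"same order type over `a`" all of whose members have gap-count vector `v`. -/
noncomputable def chi {Q : Type*} [LinearOrder Q] {m n : ℕ} (a : Fin m → Q)
    (v : Fin (m + 1) → ℕ) (D : Set (Fin n → Q)) : ℕ :=
  Set.ncard {C : Set (Fin n → Q) |
    ∃ x ∈ D, C = {y ∈ D | SameOrderType a x y} ∧ ∀ g, gapCount a x g = v g}

section Core

variable {Q : Type*} [LinearOrder Q] {m n : ℕ}

/-! ### compare helpers -/

theorem cmp_eq_of_iff {u v u' v' : Q} (h1 : u < v ↔ u' < v') (h2 : v < u ↔ v' < u') :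
    compare u v = compare u' v' := by
  rcases lt_trichotomy u v with h | h | h
  · rw [compare_lt_iff_lt.2 h, eq_comm, compare_lt_iff_lt]
    exact h1.1 h
  · rw [compare_eq_iff_eq.2 h, eq_comm, compare_eq_iff_eq]
    rcases lt_trichotomy u' v' with h' | h' | h'
    · exact absurd (h1.2 h') (by simp [h])
    · exact h'
    · exact absurd (h2.2 h') (by simp [h])
  · rw [compare_gt_iff_gt.2 h, eq_comm, compare_gt_iff_gt]
    exact h2.1 h

theorem lt_iff_of_cmp_eq {u v u' v' : Q} (h : compare u v = compare u' v') :
    u < v ↔ u' < v' := by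
  rw [← compare_lt_iff_lt, ← compare_lt_iff_lt, h]

theorem gt_iff_of_cmp_eq {u v u' v' : Q} (h : compare u v = compare u' v') :
    v < u ↔ v' < u' :=
  ⟨fun h' => compare_gt_iff_gt.1 (by rw [← h, compare_gt_iff_gt]; exact h'),
   fun h' => compare_gt_iff_gt.1 (by rw [h, compare_gt_iff_gt]; exact h')⟩

theorem eq_iff_of_cmp_eq {u v u' v' : Q} (h : compare u v = compare u' v') :
    u = v ↔ u' = v' :=
  ⟨fun h' => compare_eq_iff_eq.1 (by rw [← h, compare_eq_iff_eq]; exact h'),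
   fun h' => compare_eq_iff_eq.1 (by rw [h, compare_eq_iff_eq]; exact h')⟩

theorem cmp_swap' (u v : Q) : compare u v = (compare v u).swap := by
  rcases lt_trichotomy u v with h | h | h
  · rw [compare_lt_iff_lt.2 h, compare_gt_iff_gt.2 h]; rfl
  · rw [compare_eq_iff_eq.2 h, compare_eq_iff_eq.2 h.symm]; rfl
  · rw [compare_gt_iff_gt.2 h, compare_lt_iff_lt.2 h]; rfl

/-! ### gap lemmas -/

variable {a : Fin m → Q}

theorem gap_vs_param (ha : StrictAnti a) {g : Fin (m + 1)} {q : Q} (hg : InGap a g q)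
    (k : Fin m) : ((k : ℕ) < (g : ℕ) → q < a k) ∧ ((g : ℕ) ≤ (k : ℕ) → a k < q) := by
  constructor
  · intro hk
    have hg1 : (g : ℕ) - 1 < m := by omega
    have hq : q < a ⟨(g : ℕ) - 1, hg1⟩ := hg.2 ⟨(g : ℕ) - 1, hg1⟩ (by simp; omega)
    refine hq.trans_le ?_
    exact ha.antitone (by simp [Fin.le_def]; omega)
  · intro hk
    have hgm : (g : ℕ) < m := lt_of_le_of_lt hk k.2
    have h1 : a ⟨(g : ℕ), hgm⟩ < q := hg.1 hgm
    exact lt_of_le_of_lt (ha.antitone (by simp [Fin.le_def]; omega)) h1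

theorem gap_cross (ha : StrictAnti a) {g g' : Fin (m + 1)} {q q' : Q}
    (hgg' : (g : ℕ) < (g' : ℕ)) (hq : InGap a g q) (hq' : InGap a g' q') : q' < q := by
  have hgm : (g : ℕ) < m := by have := g'.2; omega
  have h1 : q' < a ⟨(g : ℕ), hgm⟩ := (gap_vs_param ha hq' ⟨(g : ℕ), hgm⟩).1 hgg'
  exact h1.trans (hq.1 hgm)

theorem gap_ne_param (ha : StrictAnti a) {g : Fin (m + 1)} {q : Q} (hg : InGap a g q)
    (k : Fin m) : q ≠ a k := by
  rcases lt_or_ge (k : ℕ) (g : ℕ) with h | h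
  · exact ne_of_lt ((gap_vs_param ha hg k).1 h)
  · exact ne_of_gt ((gap_vs_param ha hg k).2 h)

theorem gap_unique (ha : StrictAnti a) {g g' : Fin (m + 1)} {q : Q} (hg : InGap a g q)
    (hg' : InGap a g' q) : g = g' := by
  by_contra hne
  rcases lt_or_gt_of_ne (fun h : (g : ℕ) = (g' : ℕ) => hne (Fin.ext h)) with h | h
  · exact absurd (gap_cross ha h hg hg') (lt_irrefl q)
  · exact absurd (gap_cross ha h hg' hg) (lt_irrefl q)

theorem cmp_param_of_same_gap (ha : StrictAnti a) {g : Fin (m + 1)} {q q' : Q}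
    (hq : InGap a g q) (hq' : InGap a g q') (k : Fin m) :
    compare q (a k) = compare q' (a k) := by
  rcases lt_or_ge (k : ℕ) (g : ℕ) with h | h
  · rw [compare_lt_iff_lt.2 ((gap_vs_param ha hq k).1 h),
      compare_lt_iff_lt.2 ((gap_vs_param ha hq' k).1 h)]
  · rw [compare_gt_iff_gt.2 ((gap_vs_param ha hq k).2 h),
      compare_gt_iff_gt.2 ((gap_vs_param ha hq' k).2 h)]

theorem inGap_congr {g : Fin (m + 1)} {q q' : Q}
    (h : ∀ k, compare q (a k) = compare q' (a k)) : InGap a g q → InGap a g q' := by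
  rintro ⟨h1, h2⟩
  exact ⟨fun hm => (gt_iff_of_cmp_eq (h ⟨g, hm⟩)).1 (h1 hm),
    fun j hj => (lt_iff_of_cmp_eq (h j)).1 (h2 j hj)⟩

theorem exists_gap (ha : StrictAnti a) {q : Q} (h : ∀ k, q ≠ a k) : ∃ g, InGap a g q := by
  classical
  set s : Finset (Fin m) := Finset.univ.filter (fun k => q < a k) with hs
  have hdc : ∀ k k' : Fin m, k ∈ s → k' ≤ k → k' ∈ s := by
    intro k k' hk hle
    simp only [hs, Finset.mem_filter, Finset.mem_univ, true_and] at hk ⊢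
    exact lt_of_lt_of_le hk (ha.antitone hle)
  have hcard : s.card ≤ m := le_trans (Finset.card_le_card (Finset.subset_univ s)) (by simp)
  have hmem : ∀ k : Fin m, k ∈ s ↔ (k : ℕ) < s.card := by
    intro k
    constructor
    · intro hk
      by_contra hlt
      push_neg at hlt
      have hsub : Finset.Iic k ⊆ s := fun j hj => hdc k j hk (Finset.mem_Iic.1 hj)
      have := Finset.card_le_card hsub
      rw [Fin.card_Iic] at this
      omega
    · intro hk
      by_contra hk'
      have hsub : s ⊆ Finset.Iio k := by
        intro j hj
        simp only [Finset.mem_Iio]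
        rcases lt_or_ge j k with h' | h'
        · exact h'
        · exact absurd (hdc j k hj h') hk'
      have := Finset.card_le_card hsub
      rw [Fin.card_Iio] at this
      omega
  refine ⟨⟨s.card, by omega⟩, ?_, ?_⟩
  · intro hm
    have : (⟨s.card, hm⟩ : Fin m) ∉ s := by
      intro hmem'
      have := (hmem _).1 hmem'
      simp at this
    simp only [hs, Finset.mem_filter, Finset.mem_univ, true_and, not_lt] at this
    exact lt_of_le_of_ne this (fun he => h _ he.symm)
  · intro j hj
    simp only [Fin.val_mk] at hj
    have : j ∈ s := (hmem j).2 (by omega)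
    simpa [hs] using this

end Core

section Core2

variable {Q : Type*} [LinearOrder Q] {m n : ℕ}

/-- The full order type of a tuple over the parameters, as a pair of comparison matrices. -/
def otype (a : Fin m → Q) (x : Fin n → Q) :
    (Fin n → Fin n → Ordering) × (Fin n → Fin m → Ordering) :=
  ⟨fun i j => compare (x i) (x j), fun i k => compare (x i) (a k)⟩

theorem sameOrderType_iff_otype_eq {a : Fin m → Q} {x y : Fin n → Q} :
    SameOrderType a x y ↔ otype a x = otype a y := by
  constructor
  · rintro ⟨h1, h2⟩
    refine Prod.ext (funext fun i => funext fun j => ?_) (funext fun i => funext fun k => ?_)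
    · exact cmp_eq_of_iff (h1 i j) (h1 j i)
    · exact cmp_eq_of_iff (h2 i k).1 (h2 i k).2
  · intro h
    have h1 := congrFun₂ (congrArg Prod.fst h)
    have h2 := congrFun₂ (congrArg Prod.snd h)
    exact ⟨fun i j => lt_iff_of_cmp_eq (h1 i j),
      fun i k => ⟨lt_iff_of_cmp_eq (h2 i k), gt_iff_of_cmp_eq (h2 i k)⟩⟩

theorem otype_cmp_eq {a : Fin m → Q} {x y : Fin n → Q} (h : otype a x = otype a y) :
    (∀ i j, compare (x i) (x j) = compare (y i) (y j)) ∧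
      ∀ i k, compare (x i) (a k) = compare (y i) (a k) :=
  ⟨congrFun₂ (congrArg Prod.fst h), congrFun₂ (congrArg Prod.snd h)⟩

/-! ### rank machinery on finite sets -/

theorem ncard_lt_ncard_of_lt {S : Set Q} (hS : S.Finite) {u v : Q} (hu : u ∈ S)
    (huv : u < v) : ({w ∈ S | w < u}).ncard < ({w ∈ S | w < v}).ncard := by
  apply Set.ncard_lt_ncard
  · constructor
    · intro w hw
      exact ⟨hw.1, hw.2.trans huv⟩
    · intro hsub
      have := hsub ⟨hu, huv⟩
      exact absurd this.2 (lt_irrefl u)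
  · exact hS.subset (fun w hw => hw.1)

theorem rank_lt_rank_iff {S : Set Q} (hS : S.Finite) {u v : Q} (hu : u ∈ S) (hv : v ∈ S) :
    ({w ∈ S | w < u}).ncard < ({w ∈ S | w < v}).ncard ↔ u < v := by
  constructor
  · intro h
    rcases lt_trichotomy u v with h' | h' | h'
    · exact h'
    · subst h'; exact absurd h (lt_irrefl _)
    · exact absurd (ncard_lt_ncard_of_lt hS hv h') (by omega)
  · exact ncard_lt_ncard_of_lt hS hu

theorem rank_inj {S : Set Q} (hS : S.Finite) {u v : Q} (hu : u ∈ S) (hv : v ∈ S)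
    (h : ({w ∈ S | w < u}).ncard = ({w ∈ S | w < v}).ncard) : u = v := by
  rcases lt_trichotomy u v with h' | h' | h'
  · exact absurd (ncard_lt_ncard_of_lt hS hu h') (by omega)
  · exact h'
  · exact absurd (ncard_lt_ncard_of_lt hS hv h') (by omega)

theorem rank_lt_card {S : Set Q} (hS : S.Finite) {u : Q} (hu : u ∈ S) :
    ({w ∈ S | w < u}).ncard < S.ncard := by
  apply Set.ncard_lt_ncard _ hS
  constructor
  · exact fun w hw => hw.1
  · intro hsub
    exact absurd (hsub hu).2 (lt_irrefl u)

theorem rank_surj {S : Set Q} (hS : S.Finite) {r : ℕ} (hr : r < S.ncard) :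
    ∃ u ∈ S, ({w ∈ S | w < u}).ncard = r := by
  classical
  have hcard : hS.toFinset.card = S.ncard := (Set.ncard_eq_toFinset_card S hS).symm
  let e := hS.toFinset.orderIsoOfFin hcard
  let jr : Fin S.ncard := ⟨r, hr⟩
  let u : Q := (e jr : Q)
  have huS : u ∈ S := hS.mem_toFinset.1 (e jr).2
  refine ⟨u, huS, ?_⟩
  have himg : {w ∈ S | w < u} = (fun j : Fin S.ncard => ((e j : hS.toFinset) : Q)) ''
      (Set.Iio jr) := by
    ext w
    simp only [Set.mem_setOf_eq, Set.mem_image, Set.mem_Iio]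
    constructor
    · rintro ⟨hwS, hwu⟩
      refine ⟨e.symm ⟨w, hS.mem_toFinset.2 hwS⟩, ?_, by rw [e.apply_symm_apply]⟩
      rw [← e.lt_iff_lt, e.apply_symm_apply]
      exact Subtype.coe_lt_coe.1 hwu
    · rintro ⟨j, hj, rfl⟩
      exact ⟨hS.mem_toFinset.1 (e j).2, Subtype.coe_lt_coe.2 (e.lt_iff_lt.2 hj)⟩
  rw [himg, Set.ncard_image_of_injective _ (fun j j' h => e.injective (Subtype.val_injective h))]
  rw [← Finset.coe_Iio, Set.ncard_coe_finset, Fin.card_Iio]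

end Core2

section Core3

variable {Q : Type*} [LinearOrder Q] {m n : ℕ}

/-- The set of values of `x` lying in gap `g`. -/
def vals (a : Fin m → Q) (x : Fin n → Q) (g : Fin (m + 1)) : Set Q :=
  {q | (∃ i, x i = q) ∧ InGap a g q}

theorem vals_finite (a : Fin m → Q) (x : Fin n → Q) (g : Fin (m + 1)) :
    (vals a x g).Finite :=
  (Set.finite_range x).subset (fun _ hq => hq.1)

theorem gapCount_eq (a : Fin m → Q) (x : Fin n → Q) (g : Fin (m + 1)) :
    gapCount a x g = (vals a x g).ncard := rfl

/-- The rank of a value within the values of `x` in gap `g`. -/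
noncomputable def rnk (a : Fin m → Q) (x : Fin n → Q) (g : Fin (m + 1)) (q : Q) : ℕ :=
  ({w ∈ vals a x g | w < q}).ncard

/-- `x j` corresponds to `y i`: same gap and same rank. -/
def corr (a : Fin m → Q) (x y : Fin n → Q) (j i : Fin n) : Prop :=
  ∃ g, InGap a g (x j) ∧ InGap a g (y i) ∧ rnk a x g (x j) = rnk a y g (y i)

variable {a : Fin m → Q} {x y z : Fin n → Q}

theorem ptr_exists (ha : StrictAnti a) (hv : ∀ g, gapCount a x g = gapCount a y g)
    (i : Fin n) : (∃ k, y i = a k) ∨ ∃ j, corr a x y j i := by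
  by_cases hk : ∃ k, y i = a k
  · exact Or.inl hk
  · right
    obtain ⟨g, hg⟩ := exists_gap ha (fun k hk' => hk ⟨k, hk'⟩)
    have hmem : y i ∈ vals a y g := ⟨⟨i, rfl⟩, hg⟩
    have hr : rnk a y g (y i) < (vals a x g).ncard := by
      rw [← gapCount_eq, hv g, gapCount_eq]
      exact rank_lt_card (vals_finite a y g) hmem
    obtain ⟨u, huv, hru⟩ := rank_surj (vals_finite a x g) hr
    obtain ⟨j, hj⟩ := huv.1
    exact ⟨j, g, hj ▸ huv.2, hg, by rw [show x j = u from hj]; exact hru⟩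

open Classical in
/-- For each output coordinate, either a parameter index or an input coordinate. -/
noncomputable def ptr (a : Fin m → Q) (x y : Fin n → Q) (i : Fin n) : Fin m ⊕ Fin n :=
  if h1 : ∃ k, y i = a k then .inl h1.choose
  else if h2 : ∃ j, corr a x y j i then .inr h2.choose
  else .inr i

theorem ptr_spec (ha : StrictAnti a) (hv : ∀ g, gapCount a x g = gapCount a y g) (i : Fin n) :
    (∃ k, ptr a x y i = .inl k ∧ y i = a k) ∨
      (∃ j, ptr a x y i = .inr j ∧ corr a x y j i) := by
  classical
  rw [ptr]
  split_ifs with h1 h2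
  · exact Or.inl ⟨h1.choose, rfl, h1.choose_spec⟩
  · exact Or.inr ⟨h2.choose, rfl, h2.choose_spec⟩
  · rcases ptr_exists ha hv i with h | h
    · exact absurd h h1
    · exact absurd h h2

/-- The transfer map from the class of `x` to the class of `y`. -/
noncomputable def transfer (a : Fin m → Q) (x y : Fin n → Q) (z : Fin n → Q) : Fin n → Q :=
  fun i => Sum.elim a z (ptr a x y i)

theorem corr_param (ha : StrictAnti a) {j i : Fin n} (hc : corr a x y j i) (k : Fin m) :
    compare (x j) (a k) = compare (y i) (a k) := by
  obtain ⟨g, h1, h2, _⟩ := hc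
  exact cmp_param_of_same_gap ha h1 h2 k

theorem corr_cmp (ha : StrictAnti a) {j i j' i' : Fin n} (hc : corr a x y j i)
    (hc' : corr a x y j' i') : compare (x j) (x j') = compare (y i) (y i') := by
  obtain ⟨g, hxg, hyg, hr⟩ := hc
  obtain ⟨g', hxg', hyg', hr'⟩ := hc'
  rcases Nat.lt_trichotomy (g : ℕ) (g' : ℕ) with h | h | h
  · rw [compare_gt_iff_gt.2 (gap_cross ha h hxg hxg'),
      compare_gt_iff_gt.2 (gap_cross ha h hyg hyg')]
  · have hgg : g = g' := Fin.ext h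
    subst hgg
    have hx1 : x j ∈ vals a x g := ⟨⟨j, rfl⟩, hxg⟩
    have hx2 : x j' ∈ vals a x g := ⟨⟨j', rfl⟩, hxg'⟩
    have hy1 : y i ∈ vals a y g := ⟨⟨i, rfl⟩, hyg⟩
    have hy2 : y i' ∈ vals a y g := ⟨⟨i', rfl⟩, hyg'⟩
    refine cmp_eq_of_iff ?_ ?_
    · rw [← rank_lt_rank_iff (vals_finite a x g) hx1 hx2,
        ← rank_lt_rank_iff (vals_finite a y g) hy1 hy2]
      unfold rnk at hr hr'
      omega
    · rw [← rank_lt_rank_iff (vals_finite a x g) hx2 hx1,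
        ← rank_lt_rank_iff (vals_finite a y g) hy2 hy1]
      unfold rnk at hr hr'
      omega
  · rw [compare_lt_iff_lt.2 (gap_cross ha h hxg' hxg),
      compare_lt_iff_lt.2 (gap_cross ha h hyg' hyg)]

theorem otype_transfer (ha : StrictAnti a) (hv : ∀ g, gapCount a x g = gapCount a y g)
    (hz : otype a z = otype a x) : otype a (transfer a x y z) = otype a y := by
  obtain ⟨hz1, hz2⟩ := otype_cmp_eq hz
  refine Prod.ext (funext fun i => funext fun i' => ?_) (funext fun i => funext fun k => ?_)
  · show compare (transfer a x y z i) (transfer a x y z i') = compare (y i) (y i')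
    rcases ptr_spec ha hv i with ⟨k, hp, hyk⟩ | ⟨j, hp, hc⟩ <;>
      rcases ptr_spec ha hv i' with ⟨k', hp', hyk'⟩ | ⟨j', hp', hc'⟩ <;>
        simp only [transfer, hp, hp', Sum.elim_inl, Sum.elim_inr]
    · rw [hyk, hyk']
    · rw [hyk, cmp_swap' (a k) (z j'), cmp_swap' (a k) (y i'), hz2 j' k, corr_param ha hc' k]
    · rw [hyk', hz2 j k', corr_param ha hc k']
    · rw [hz1 j j', corr_cmp ha hc hc']
  · show compare (transfer a x y z i) (a k) = compare (y i) (a k)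
    rcases ptr_spec ha hv i with ⟨k', hp, hyk⟩ | ⟨j, hp, hc⟩ <;>
      simp only [transfer, hp, Sum.elim_inl, Sum.elim_inr]
    · rw [hyk]
    · rw [hz2 j k, corr_param ha hc k]

theorem transfer_roundtrip (ha : StrictAnti a)
    (hv : ∀ g, gapCount a x g = gapCount a y g)
    (hz : otype a z = otype a x) : transfer a y x (transfer a x y z) = z := by
  have hv' : ∀ g, gapCount a y g = gapCount a x g := fun g => (hv g).symm
  obtain ⟨hz1, hz2⟩ := otype_cmp_eq hz
  funext i
  rcases ptr_spec ha hv' i with ⟨k, hp, hxk⟩ | ⟨j, hp, hc⟩ <;>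
    simp only [transfer, hp, Sum.elim_inl, Sum.elim_inr]
  · exact (eq_iff_of_cmp_eq (hz2 i k)).2 hxk |>.symm
  · -- `corr a y x j i` : y j and x i in the same gap with the same rank
    obtain ⟨g, hyj, hxi, hr⟩ := hc
    rcases ptr_spec ha hv j with ⟨k, hp', hyk⟩ | ⟨j'', hp', hc''⟩
    · exact absurd hyk (gap_ne_param ha hyj k)
    · simp only [hp', Sum.elim_inr]
      obtain ⟨g₁, hxj'', hyj₁, hr₁⟩ := hc''
      have hg : g₁ = g := gap_unique ha hyj₁ hyj
      subst hg
      have hxx : x j'' = x i := by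
        refine rank_inj (vals_finite a x g₁) ⟨⟨j'', rfl⟩, hxj''⟩ ⟨⟨i, rfl⟩, hxi⟩ ?_
        unfold rnk at hr hr₁
        omega
      exact (eq_iff_of_cmp_eq (hz1 j'' i)).2 hxx

theorem gapCount_congr (ha : StrictAnti a) (hxy : otype a x = otype a y) (g : Fin (m + 1)) :
    gapCount a x g = gapCount a y g := by
  classical
  obtain ⟨h1, h2⟩ := otype_cmp_eq hxy
  set I : Set (Fin n) := {i | InGap a g (x i)} with hI
  have hIy : ∀ i, InGap a g (x i) ↔ InGap a g (y i) := fun i =>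
    ⟨fun h => inGap_congr (fun k => h2 i k) h, fun h => inGap_congr (fun k => (h2 i k).symm) h⟩
  have hvx : vals a x g = x '' I := by
    ext q
    constructor
    · rintro ⟨⟨i, rfl⟩, hg⟩
      exact ⟨i, hg, rfl⟩
    · rintro ⟨i, hi, rfl⟩
      exact ⟨⟨i, rfl⟩, hi⟩
  have hvy : vals a y g = y '' I := by
    ext q
    constructor
    · rintro ⟨⟨i, rfl⟩, hg⟩
      exact ⟨i, (hIy i).2 hg, rfl⟩
    · rintro ⟨i, hi, rfl⟩
      exact ⟨⟨i, rfl⟩, (hIy i).1 hi⟩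
  set ψ : Q → Q := fun q => if h : ∃ i, i ∈ I ∧ x i = q then y h.choose else q with hψ
  have hψx : ∀ i ∈ I, ψ (x i) = y i := by
    intro i hi
    have h : ∃ i', i' ∈ I ∧ x i' = x i := ⟨i, hi, rfl⟩
    simp only [hψ, dif_pos h]
    exact (eq_iff_of_cmp_eq (h1 h.choose i)).1 h.choose_spec.2
  have hinj : Set.InjOn ψ (x '' I) := by
    rintro q ⟨i, hi, rfl⟩ q' ⟨i', hi', rfl⟩ hqq
    rw [hψx i hi, hψx i' hi'] at hqq
    exact (eq_iff_of_cmp_eq (h1 i i')).2 hqq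
  have himg : ψ '' (x '' I) = y '' I := by
    ext q
    constructor
    · rintro ⟨q', ⟨i, hi, rfl⟩, rfl⟩
      exact ⟨i, hi, (hψx i hi).symm⟩
    · rintro ⟨i, hi, rfl⟩
      exact ⟨x i, ⟨i, hi, rfl⟩, hψx i hi⟩
  rw [gapCount_eq, gapCount_eq, hvx, hvy, ← himg, Set.ncard_image_of_injOn hinj]

end Core3

section Invariance

open Cardinal FirstOrder FirstOrder.Language Set

variable {Q : Type*} [LinearOrder Q] [DenselyOrdered Q] [NoMinOrder Q] [NoMaxOrder Q]
  [Nonempty Q] {m n : ℕ}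

omit [DenselyOrdered Q] [NoMinOrder Q] [NoMaxOrder Q] [Nonempty Q] in
theorem le_iff_of_cmp_eq {u v u' v' : Q} (h : compare u v = compare u' v') :
    u ≤ v ↔ u' ≤ v' := by
  rw [← not_lt, ← not_lt]
  exact not_congr (gt_iff_of_cmp_eq h)

theorem definable_invariant {a : Fin m → Q} {D : Set (Fin n → Q)}
    (hD : (Set.range a).Definable Language.order D) {x y : Fin n → Q}
    (hxy : otype a x = otype a y) (hx : x ∈ D) : y ∈ D := by
  classical
  haveI : Language.order.OrderedStructure Q := ⟨fun v => Iff.rfl⟩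
  obtain ⟨h1, h2⟩ := otype_cmp_eq hxy
  rw [Set.definable_iff_exists_formula_sum] at hD
  obtain ⟨φ, rfl⟩ := hD
  simp only [Set.mem_setOf_eq] at hx ⊢
  obtain ⟨q0⟩ := ‹Nonempty Q›
  have hsfin : (Set.range a ∪ Set.range x ∪ Set.range y ∪ {q0}).Finite :=
    (((Set.finite_range a).union (Set.finite_range x)).union (Set.finite_range y)).union
      (Set.finite_singleton q0)
  obtain ⟨S, hsub, hScard⟩ := Language.exists_elementarySubstructure_card_eq Language.order
    (Set.range a ∪ Set.range x ∪ Set.range y ∪ {q0})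
    Cardinal.aleph0 le_rfl (Cardinal.lift_le.2 hsfin.lt_aleph0.le)
    (by simp [order.card_eq_one, Cardinal.one_le_aleph0])
    (Cardinal.lift_le.2 (Cardinal.aleph0_le_mk Q))
  have haS : ∀ k, a k ∈ S := fun k => hsub (Or.inl (Or.inl (Or.inl ⟨k, rfl⟩)))
  have hxS : ∀ i, x i ∈ S := fun i => hsub (Or.inl (Or.inl (Or.inr ⟨i, rfl⟩)))
  have hyS : ∀ i, y i ∈ S := fun i => hsub (Or.inl (Or.inr ⟨i, rfl⟩))
  have hq0S : q0 ∈ S := hsub (Or.inr rfl)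
  letI : Language.order.Structure ↥S := ElementarySubstructure.inducedStructure S
  haveI hScount : Countable ↥S := by
    rw [Cardinal.lift_inj] at hScard
    exact Cardinal.mk_le_aleph0_iff.1 hScard.le
  haveI : Nonempty ↥S := ⟨⟨q0, hq0S⟩⟩
  haveI : Language.order.OrderedStructure (↥S) := ⟨fun v => Iff.rfl⟩
  haveI hSdlo : (↥S) ⊨ Language.order.dlo := ElementarySubstructure.theory_model
  have hult := (Language.isFraisseLimit_of_countable_nonempty_dlo ↥S).ultrahomogeneous
  -- the map F realizing the partial isomorphism
  set F : Q → Q := fun q => if h : ∃ i, x i = q then y h.choose else q with hF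
  have hFa : ∀ k, F (a k) = a k := by
    intro k
    simp only [hF]
    split_ifs with h
    · exact (eq_iff_of_cmp_eq (h2 h.choose k)).1 h.choose_spec
    · rfl
  have hFx : ∀ i, F (x i) = y i := by
    intro i
    have h : ∃ i', x i' = x i := ⟨i, rfl⟩
    simp only [hF, dif_pos h]
    exact (eq_iff_of_cmp_eq (h1 h.choose i)).1 h.choose_spec
  have hcmp : ∀ p ∈ Set.range a ∪ Set.range x, ∀ q ∈ Set.range a ∪ Set.range x,
      compare (F p) (F q) = compare p q := by
    rintro p (⟨k, rfl⟩ | ⟨i, rfl⟩) q (⟨k', rfl⟩ | ⟨j, rfl⟩)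
    · rw [hFa k, hFa k']
    · rw [hFa k, hFx j, cmp_swap' (a k) (y j), cmp_swap' (a k) (x j), h2 j k]
    · rw [hFx i, hFa k', h2 i k']
    · rw [hFx i, hFx j, h1 i j]
  have hFS : ∀ p ∈ Set.range a ∪ Set.range x, F p ∈ S := by
    rintro p (⟨k, rfl⟩ | ⟨i, rfl⟩)
    · rw [hFa k]; exact haS k
    · rw [hFx i]; exact hyS i
  -- the finitely generated substructure of S on (range a ∪ range x)
  have hs₀fin : ({b : ↥S | (b : Q) ∈ Set.range a ∪ Set.range x}).Finite :=
    Set.Finite.preimage (Set.injOn_of_injective Subtype.val_injective)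
      ((Set.finite_range a).union (Set.finite_range x))
  set S₀ : Language.order.Substructure ↥S :=
    Substructure.closure Language.order {b : ↥S | (b : Q) ∈ Set.range a ∪ Set.range x} with hS₀
  letI : Language.order.Structure ↥S₀ := Substructure.inducedStructure
  have hS₀fg : S₀.FG := Substructure.fg_closure hs₀fin
  have hS₀mem : ∀ b : ↥S, b ∈ S₀ ↔ (b : Q) ∈ Set.range a ∪ Set.range x := fun b =>
    Substructure.mem_closure_iff_of_isRelational Language.order _ b
  -- the order embedding S₀ ↪o S
  have hmemS : ∀ b : ↥S₀, F ((b : ↥S) : Q) ∈ S := fun b => hFS _ ((hS₀mem _).1 b.2)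
  set oemb : ↥S₀ ↪o ↥S := OrderEmbedding.ofMapLEIff
    (fun b => (⟨F ((b : ↥S) : Q), hmemS b⟩ : ↥S))
    (fun b b' => by
      have hb := (hS₀mem _).1 b.2
      have hb' := (hS₀mem _).1 b'.2
      exact le_iff_of_cmp_eq (hcmp _ hb _ hb')) with hoemb
  obtain ⟨g, hg⟩ := hult S₀ hS₀fg (StrongHomClass.toEmbedding oemb)
  have hgb : ∀ (b : ↥S) (hb : b ∈ S₀), ((g b : ↥S) : Q) = F (b : Q) := by
    intro b hb
    have := congrFun (congrArg (fun f => f.toFun) hg) ⟨b, hb⟩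
    exact (congrArg Subtype.val this).symm
  -- variable assignments
  set ρx : ↥(Set.range a) ⊕ Fin n → ↥S := Sum.elim
    (fun p => ⟨(p : Q), hsub (Or.inl (Or.inl (Or.inl p.2)))⟩)
    (fun i => ⟨x i, hxS i⟩) with hρx
  set ρy : ↥(Set.range a) ⊕ Fin n → ↥S := Sum.elim
    (fun p => ⟨(p : Q), hsub (Or.inl (Or.inl (Or.inl p.2)))⟩)
    (fun i => ⟨y i, hyS i⟩) with hρy
  have hcx : Sum.elim (↑) x = (Subtype.val : ↥S → Q) ∘ ρx := by
    funext c; rcases c with p | i <;> rfl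
  have hcy : Sum.elim (↑) y = (Subtype.val : ↥S → Q) ∘ ρy := by
    funext c; rcases c with p | i <;> rfl
  have hgρ : ⇑g ∘ ρx = ρy := by
    funext c
    rcases c with p | i
    · apply Subtype.ext
      show ((g (ρx (Sum.inl p)) : ↥S) : Q) = (p : Q)
      have hmem : ρx (Sum.inl p) ∈ S₀ := (hS₀mem _).2 (Or.inl p.2)
      rw [hgb _ hmem]
      obtain ⟨k, hk⟩ := p.2
      show F (p : Q) = (p : Q)
      rw [← hk, hFa k]
    · apply Subtype.ext
      show ((g (ρx (Sum.inr i)) : ↥S) : Q) = y i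
      have hmem : ρx (Sum.inr i) ∈ S₀ := (hS₀mem _).2 (Or.inr ⟨i, rfl⟩)
      rw [hgb _ hmem]
      exact hFx i
  -- chain of realizations
  have hx' : φ.Realize ρx := by
    rw [hcx] at hx
    exact (S.subtype.map_formula φ ρx).1 (by exact hx)
  have hy' : φ.Realize ρy := by
    rw [← hgρ]
    exact (StrongHomClass.realize_formula g φ).2 hx'
  rw [hcy]
  exact (S.subtype.map_formula φ ρy).2 hy'

end Invariance

section Chi

variable {Q : Type*} [LinearOrder Q] {m n : ℕ}

noncomputable def chi' {Q : Type*} [LinearOrder Q] {m n : ℕ} (a : Fin m → Q)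
    (v : Fin (m + 1) → ℕ) (D : Set (Fin n → Q)) : ℕ :=
  Set.ncard {t : (Fin n → Fin n → Ordering) × (Fin n → Fin m → Ordering) |
    ∃ x ∈ D, otype a x = t ∧ ∀ g, gapCount a x g = v g}

theorem chi_eq_chi' (a : Fin m → Q) {D : Set (Fin n → Q)}
    (hinv : ∀ x y, otype a x = otype a y → x ∈ D → y ∈ D) (v : Fin (m + 1) → ℕ) :
    chi a v D = chi' a v D := by
  have hclass : ∀ x ∈ D, {y ∈ D | SameOrderType a x y} = {y | otype a y = otype a x} := by
    intro x hx
    ext y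
    simp only [Set.mem_setOf_eq]
    constructor
    · rintro ⟨_, hsame⟩
      exact (sameOrderType_iff_otype_eq.1 hsame).symm
    · intro hot
      exact ⟨hinv x y hot.symm hx, sameOrderType_iff_otype_eq.2 hot.symm⟩
  have himg : {C : Set (Fin n → Q) |
      ∃ x ∈ D, C = {y ∈ D | SameOrderType a x y} ∧ ∀ g, gapCount a x g = v g} =
      (fun t => {y | otype a y = t}) ''
        {t | ∃ x ∈ D, otype a x = t ∧ ∀ g, gapCount a x g = v g} := by
    ext C
    simp only [Set.mem_setOf_eq, Set.mem_image]
    constructor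
    · rintro ⟨x, hx, rfl, hgc⟩
      exact ⟨otype a x, ⟨x, hx, rfl, hgc⟩, (hclass x hx).symm⟩
    · rintro ⟨t, ⟨x, hx, rfl, hgc⟩, rfl⟩
      exact ⟨x, hx, (hclass x hx).symm, hgc⟩
  rw [chi, chi', himg]
  apply Set.ncard_image_of_injOn
  rintro t ⟨x, _, rfl, _⟩ t' ⟨x', _, rfl, _⟩ hKe
  exact ((Set.ext_iff.1 hKe x).1 rfl)

end Chi

section Defin

open FirstOrder FirstOrder.Language

variable {Q : Type*} [LinearOrder Q] {m N : ℕ}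

/-- The term corresponding to a coordinate or a parameter. -/
def tmOf (a : Fin m → Q) (c : Fin N ⊕ Fin m) :
    Language.order.Term ((↥(Set.range a) ⊕ Fin N) ⊕ Fin 0) :=
  Sum.elim (fun i => Term.var (Sum.inl (Sum.inr i)))
    (fun k => Term.var (Sum.inl (Sum.inl ⟨a k, ⟨k, rfl⟩⟩))) c

theorem realize_tmOf (a : Fin m → Q) (u : Fin N → Q) (c : Fin N ⊕ Fin m)
    (xs : Fin 0 → Q) :
    (tmOf a c).realize (Sum.elim (Sum.elim Subtype.val u) xs) = Sum.elim u a c := by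
  rcases c with i | k <;> rfl

theorem definable_cmp (a : Fin m → Q) (o : Ordering) (c d : Fin N ⊕ Fin m) :
    (Set.range a).Definable Language.order
      {u : Fin N → Q | compare (Sum.elim u a c) (Sum.elim u a d) = o} := by
  haveI : Language.order.OrderedStructure Q := ⟨fun v => Iff.rfl⟩
  rw [Set.definable_iff_exists_formula_sum]
  rcases o with _ | _ | _
  · refine ⟨Term.lt (tmOf a c) (tmOf a d), ?_⟩
    ext u
    simp only [Set.mem_setOf_eq, Formula.Realize, Term.realize_lt, realize_tmOf,
      compare_lt_iff_lt]
  · refine ⟨Term.bdEqual (tmOf a c) (tmOf a d), ?_⟩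
    ext u
    simp only [Set.mem_setOf_eq, Formula.Realize, BoundedFormula.realize_bdEqual, realize_tmOf,
      compare_eq_iff_eq]
  · refine ⟨Term.lt (tmOf a d) (tmOf a c), ?_⟩
    ext u
    simp only [Set.mem_setOf_eq, Formula.Realize, Term.realize_lt, realize_tmOf,
      compare_gt_iff_gt]

end Defin

instance : Fintype Ordering :=
  ⟨{.lt, .eq, .gt}, fun o => by cases o <;> decide⟩


/-- If all characteristics over a decreasing parameter tuple `a` of two `a`-definable sets
agree, then the sets are in definable bijection. -/
theorem dlo_chi_eq_defBij {Q : Type*} [LinearOrder Q] [DenselyOrdered Q] [NoMinOrder Q]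
    [NoMaxOrder Q] [Nonempty Q] {n m : ℕ} (a : Fin m → Q) (ha : StrictAnti a)
    (D₁ D₂ : Set (Fin n → Q))
    (h₁ : (Set.range a).Definable Language.order D₁)
    (h₂ : (Set.range a).Definable Language.order D₂)
    (h : ∀ v : Fin (m + 1) → ℕ, chi a v D₁ = chi a v D₂) :
    DefBij D₁ D₂ := by
  classical
  have hinv₁ : ∀ x y : Fin n → Q, otype a x = otype a y → x ∈ D₁ → y ∈ D₁ :=
    fun x y hxy hx => definable_invariant h₁ hxy hx
  have hinv₂ : ∀ x y : Fin n → Q, otype a x = otype a y → x ∈ D₂ → y ∈ D₂ :=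
    fun x y hxy hx => definable_invariant h₂ hxy hx
  set Ot := (Fin n → Fin n → Ordering) × (Fin n → Fin m → Ordering) with hOt
  set gc : (Fin n → Q) → (Fin (m + 1) → ℕ) := fun x g => gapCount a x g with hgcdef
  have hgc_congr : ∀ {x y : Fin n → Q}, otype a x = otype a y → gc x = gc y :=
    fun hxy => funext (fun g => gapCount_congr ha hxy g)
  set St : Set (Fin n → Q) → (Fin (m + 1) → ℕ) → Set Ot := fun D v =>
    {t | ∃ x ∈ D, otype a x = t ∧ ∀ g, gapCount a x g = v g} with hSt
  -- matching bijections on order types, one per gap-count vector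
  have hcard : ∀ v, (St D₁ v).encard = (St D₂ v).encard := by
    intro v
    rw [← (Set.toFinite (St D₁ v)).cast_ncard_eq, ← (Set.toFinite (St D₂ v)).cast_ncard_eq]
    have := h v
    rw [chi_eq_chi' a hinv₁ v, chi_eq_chi' a hinv₂ v] at this
    exact congrArg _ this
  have hbij : ∀ v, ∃ fv : Ot → Ot, Set.BijOn fv (St D₁ v) (St D₂ v) :=
    fun v => (Set.toFinite (St D₁ v)).exists_bijOn_of_encard_eq (hcard v)
  choose σf hσf using hbij
  -- representatives of classes
  set pick : Set (Fin n → Q) → Ot → (Fin n → Q) := fun D t =>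
    if h : ∃ x ∈ D, otype a x = t then h.choose else Classical.arbitrary _ with hpickdef
  have hpick : ∀ (D : Set (Fin n → Q)) (t : Ot), (∃ x ∈ D, otype a x = t) →
      pick D t ∈ D ∧ otype a (pick D t) = t := by
    intro D t hex
    simp only [hpickdef, dif_pos hex]
    exact ⟨hex.choose_spec.1, hex.choose_spec.2⟩
  set T₁ : Set Ot := {t | ∃ x ∈ D₁, otype a x = t} with hT₁
  set T₂ : Set Ot := {t | ∃ x ∈ D₂, otype a x = t} with hT₂
  set σ : Ot → Ot := fun t => σf (gc (pick D₁ t)) t with hσdef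
  -- basic facts about St and σ
  have hmemSt₁ : ∀ t ∈ T₁, t ∈ St D₁ (gc (pick D₁ t)) := by
    intro t ht
    obtain ⟨hD, hot⟩ := hpick D₁ t ht
    exact ⟨pick D₁ t, hD, hot, fun g => rfl⟩
  have hmemSt₂ : ∀ t ∈ T₂, t ∈ St D₂ (gc (pick D₂ t)) := by
    intro t ht
    obtain ⟨hD, hot⟩ := hpick D₂ t ht
    exact ⟨pick D₂ t, hD, hot, fun g => rfl⟩
  have hgcSt₁ : ∀ t v, t ∈ St D₁ v → gc (pick D₁ t) = v := by
    rintro t v ⟨x, hxD, hxt, hxv⟩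
    have := hpick D₁ t ⟨x, hxD, hxt⟩
    rw [hgc_congr (this.2.trans hxt.symm)]
    exact funext hxv
  have hgcSt₂ : ∀ t v, t ∈ St D₂ v → gc (pick D₂ t) = v := by
    rintro t v ⟨x, hxD, hxt, hxv⟩
    have := hpick D₂ t ⟨x, hxD, hxt⟩
    rw [hgc_congr (this.2.trans hxt.symm)]
    exact funext hxv
  have hσSt : ∀ t ∈ T₁, σ t ∈ St D₂ (gc (pick D₁ t)) :=
    fun t ht => (hσf _).mapsTo (hmemSt₁ t ht)
  have hgcσ : ∀ t ∈ T₁, gc (pick D₂ (σ t)) = gc (pick D₁ t) :=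
    fun t ht => hgcSt₂ _ _ (hσSt t ht)
  -- the transfer endpoints
  set X : Ot → (Fin n → Q) := fun t => pick D₁ t with hXdef
  set Y : Ot → (Fin n → Q) := fun t => pick D₂ (σ t) with hYdef
  have hvXY : ∀ t ∈ T₁, ∀ g, gapCount a (X t) g = gapCount a (Y t) g := by
    intro t ht g
    have := hgcσ t ht
    exact (congrFun this g).symm
  have hXmem : ∀ t ∈ T₁, X t ∈ D₁ ∧ otype a (X t) = t := fun t ht => hpick D₁ t ht
  have hYmem : ∀ t ∈ T₁, Y t ∈ D₂ ∧ otype a (Y t) = σ t := by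
    intro t ht
    refine hpick D₂ (σ t) ?_
    obtain ⟨x, hxD, hxt, _⟩ := hσSt t ht
    exact ⟨x, hxD, hxt⟩
  -- the global map
  set f : (Fin n → Q) → (Fin n → Q) := fun z =>
    if h : otype a z ∈ T₁ then transfer a (X (otype a z)) (Y (otype a z)) z else z with hfdef
  have hfz : ∀ z ∈ D₁, f z = transfer a (X (otype a z)) (Y (otype a z)) z := by
    intro z hz
    have ht : otype a z ∈ T₁ := ⟨z, hz, rfl⟩
    simp only [hfdef, dif_pos ht]
  have hot_fz : ∀ z ∈ D₁, otype a (f z) = σ (otype a z) := by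
    intro z hz
    have ht : otype a z ∈ T₁ := ⟨z, hz, rfl⟩
    rw [hfz z hz]
    rw [otype_transfer ha (hvXY _ ht) (hXmem _ ht).2.symm]
    exact (hYmem _ ht).2
  have hmapsto : ∀ z ∈ D₁, f z ∈ D₂ := by
    intro z hz
    have ht : otype a z ∈ T₁ := ⟨z, hz, rfl⟩
    refine hinv₂ (Y (otype a z)) (f z) ?_ (hYmem _ ht).1
    rw [hot_fz z hz, (hYmem _ ht).2]
  have hround : ∀ z ∈ D₁, transfer a (Y (otype a z)) (X (otype a z)) (f z) = z := by
    intro z hz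
    have ht : otype a z ∈ T₁ := ⟨z, hz, rfl⟩
    rw [hfz z hz]
    exact transfer_roundtrip ha (hvXY _ ht) (hXmem _ ht).2.symm
  have hinj : Set.InjOn f D₁ := by
    intro z hz z' hz' hff
    have ht : otype a z ∈ T₁ := ⟨z, hz, rfl⟩
    have ht' : otype a z' ∈ T₁ := ⟨z', hz', rfl⟩
    have hσeq : σ (otype a z) = σ (otype a z') := by
      rw [← hot_fz z hz, ← hot_fz z' hz', hff]
    have hveq : gc (pick D₁ (otype a z)) = gc (pick D₁ (otype a z')) := by
      have m1 := hσSt _ ht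
      have m2 := hσSt _ ht'
      rw [hσeq] at m1
      rw [← hgcSt₂ _ _ m1, ← hgcSt₂ _ _ m2]
    have hteq : otype a z = otype a z' := by
      refine (hσf (gc (pick D₁ (otype a z)))).injOn (hmemSt₁ _ ht) ?_ ?_
      · rw [hveq]; exact hmemSt₁ _ ht'
      · show σf _ (otype a z) = σf _ (otype a z')
        have e1 : σf (gc (pick D₁ (otype a z))) (otype a z) = σ (otype a z) := rfl
        have e2 : σf (gc (pick D₁ (otype a z))) (otype a z') = σ (otype a z') := by
          rw [hσdef]; rw [hveq]
        rw [e1, e2, hσeq]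
    calc z = transfer a (Y (otype a z)) (X (otype a z)) (f z) := (hround z hz).symm
    _ = transfer a (Y (otype a z')) (X (otype a z')) (f z') := by rw [hff, hteq]
    _ = z' := hround z' hz'
  have hsurj : Set.SurjOn f D₁ D₂ := by
    intro w hw
    have hs : otype a w ∈ T₂ := ⟨w, hw, rfl⟩
    have hsSt : otype a w ∈ St D₂ (gc (pick D₂ (otype a w))) := hmemSt₂ _ hs
    obtain ⟨t, htSt, hft⟩ := (hσf (gc (pick D₂ (otype a w)))).surjOn hsSt
    have ht : t ∈ T₁ := by
      obtain ⟨x, hxD, hxt, _⟩ := htSt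
      exact ⟨x, hxD, hxt⟩
    have hgct : gc (pick D₁ t) = gc (pick D₂ (otype a w)) := hgcSt₁ _ _ htSt
    have hσt : σ t = otype a w := by
      show σf (gc (pick D₁ t)) t = otype a w
      rw [hgct]
      exact hft
    have hwY : otype a w = otype a (Y t) := by rw [(hYmem _ ht).2, hσt]
    have hv' : ∀ g, gapCount a (Y t) g = gapCount a (X t) g := fun g => (hvXY _ ht g).symm
    set z : Fin n → Q := transfer a (Y t) (X t) w with hzdef
    have hotz : otype a z = t := by
      rw [hzdef, otype_transfer ha hv' hwY]
      exact (hXmem _ ht).2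
    have hzD : z ∈ D₁ := hinv₁ (X t) z ((hXmem _ ht).2.trans hotz.symm) (hXmem _ ht).1
    refine ⟨z, hzD, ?_⟩
    rw [hfz z hzD, hotz]
    exact transfer_roundtrip ha hv' hwY
  -- definability of the graph
  refine ⟨f, ⟨hmapsto, hinj, hsurj⟩, Set.range a, Set.finite_range a, ?_⟩
  set ptrT : Ot → Fin n → (Fin (n + n) ⊕ Fin m) := fun t i =>
    Sum.elim (fun k => Sum.inr k) (fun j => Sum.inl (Fin.castAdd n j))
      (ptr a (X t) (Y t) i) with hptrT
  set Gp : Ot → Set (Fin (n + n) → Q) := fun t =>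
    ((⋂ p ∈ (Finset.univ : Finset (Fin n × Fin n)),
      {u : Fin (n + n) → Q | compare (Sum.elim u a (Sum.inl (Fin.castAdd n p.1)))
        (Sum.elim u a (Sum.inl (Fin.castAdd n p.2))) = t.1 p.1 p.2}) ∩
     (⋂ p ∈ (Finset.univ : Finset (Fin n × Fin m)),
      {u : Fin (n + n) → Q | compare (Sum.elim u a (Sum.inl (Fin.castAdd n p.1)))
        (Sum.elim u a (Sum.inr p.2)) = t.2 p.1 p.2})) ∩
     (⋂ i ∈ (Finset.univ : Finset (Fin n)),
      {u : Fin (n + n) → Q | compare (Sum.elim u a (Sum.inl (Fin.natAdd n i)))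
        (Sum.elim u a (ptrT t i)) = Ordering.eq}) with hGp
  have hGraph : graphOn D₁ f = ⋃ t ∈ (Set.toFinite T₁).toFinset, Gp t := by
    ext u
    simp only [graphOn, Set.mem_setOf_eq, Set.mem_iUnion, Set.Finite.mem_toFinset,
      exists_prop]
    constructor
    · rintro ⟨z, hz, rfl⟩
      have ht : otype a z ∈ T₁ := ⟨z, hz, rfl⟩
      refine ⟨otype a z, ht, ⟨⟨?_, ?_⟩, ?_⟩⟩
      · simp only [Set.mem_iInter, Set.mem_setOf_eq, Finset.mem_univ, forall_const]
        intro p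
        simp only [Sum.elim_inl, Fin.append_left]
        rfl
      · simp only [Set.mem_iInter, Set.mem_setOf_eq, Finset.mem_univ, forall_const]
        intro p
        simp only [Sum.elim_inl, Sum.elim_inr, Fin.append_left]
        rfl
      · simp only [Set.mem_iInter, Set.mem_setOf_eq, Finset.mem_univ, forall_const]
        intro i
        simp only [Sum.elim_inl, Fin.append_right]
        rw [compare_eq_iff_eq, hfz z hz]
        show transfer a (X (otype a z)) (Y (otype a z)) z i = _
        rw [transfer, hptrT]
        rcases hptr : ptr a (X (otype a z)) (Y (otype a z)) i with k | j
        · simp only [hptr, Sum.elim_inl, Sum.elim_inr]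
        · simp only [hptr, Sum.elim_inl, Sum.elim_inr, Fin.append_left]
    · rintro ⟨t, ht, ⟨⟨hP1, hP2⟩, hP3⟩⟩
      simp only [Set.mem_iInter, Set.mem_setOf_eq, Finset.mem_univ, forall_const] at hP1 hP2 hP3
      set z : Fin n → Q := fun i => u (Fin.castAdd n i) with hzdef
      have hotz : otype a z = t := by
        refine Prod.ext (funext fun i => funext fun j => ?_) (funext fun i => funext fun k => ?_)
        · have := hP1 (i, j)
          exact this
        · have := hP2 (i, k)
          exact this
      have hzD : z ∈ D₁ := hinv₁ (X t) z ((hXmem _ ht).2.trans hotz.symm) (hXmem _ ht).1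
      have hfzu : ∀ i, f z i = u (Fin.natAdd n i) := by
        intro i
        have h3 := hP3 i
        simp only [Sum.elim_inl, compare_eq_iff_eq] at h3
        rw [hfz z hzD, hotz]
        show transfer a (X t) (Y t) z i = _
        rw [transfer]
        rcases hptr : ptr a (X t) (Y t) i with k | j
        · rw [hptrT] at h3
          simp only [hptr, Sum.elim_inl, Sum.elim_inr] at h3 ⊢
          exact h3.symm
        · rw [hptrT] at h3
          simp only [hptr, Sum.elim_inl, Sum.elim_inr] at h3 ⊢
          exact h3.symm
      refine ⟨z, hzD, ?_⟩
      funext l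
      refine Fin.addCases (fun i => ?_) (fun i => ?_) l
      · rw [Fin.append_left]
      · rw [Fin.append_right, hfzu i]
  rw [hGraph]
  apply Set.definable_biUnion_finset
  intro t
  exact ((Set.definable_biInter_finset (fun p => definable_cmp a _ _ _) _).inter
    (Set.definable_biInter_finset (fun p => definable_cmp a _ _ _) _)).inter
    (Set.definable_biInter_finset (fun i => definable_cmp a _ _ _) _)
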